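/- Fix n ≥ 2 and complex numbers q_{ij} (1 ≤ i, j ≤ n) with q_{ii} = 1, q_{ji} = q_{ij}^{-1} and |q_{ij}| = 1. Let K be a complex Hilbert space and a_1, …, a_n bounded operators on K. On F = ℓ²(Λ̃; K) let Ṽ_i be the isometry given by (Ṽ_i f)(iα) = f(α) and (Ṽ_i f)(β) = 0 when β does not begin with the letter i; let F_q = { f ∈ F : f(α ∘ σ^{-1}) = q^σ(α) f(α) for every word α of length m and every σ ∈ S_m, all m } (a closed subspace invariant under every Ṽ_i^* and under the pointwise operators â_i, where (â_i f)(α) = a_i(f(α))); let Q be the orthogonal projection of F onto F_q and G̃_i = Q(Ṽ_i + Ṽ_i^*)|_{F_q}. Then max( ‖Σ_{i=1}^n a_i a_i^*‖^{1/2}, ‖Σ_{i=1}^n a_i^* a_i‖^{1/2} ) ≤ ‖Σ_{i=1}^n â_i G̃_i‖_{B(F_q)} ≤ 2 · max( ‖Σ_{i=1}^n a_i a_i^*‖^{1/2}, ‖Σ_{i=1}^n a_i^* a_i‖^{1/2} ). -/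

import Mathlib

open scoped BigOperators

/-- `q^σ(x) = ∏ q_{x_{σ⁻¹(k)} x_{σ⁻¹(i)}}`, the product over all pairs `i < k`
with `σ⁻¹(i) > σ⁻¹(k)`. -/
noncomputable def qSigma {n : ℕ} (q : Fin n → Fin n → ℂ) {m : ℕ} (x : Fin m → Fin n)
    (σ : Equiv.Perm (Fin m)) : ℂ :=
  ∏ p ∈ Finset.univ.filter (fun p : Fin m × Fin m => p.1 < p.2 ∧ σ⁻¹ p.2 < σ⁻¹ p.1),
    q (x (σ⁻¹ p.2)) (x (σ⁻¹ p.1))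

set_option linter.unusedSectionVars false
set_option maxHeartbeats 4000000

section
variable {K : Type*} [NormedAddCommGroup K] [InnerProductSpace ℂ K] [CompleteSpace K]
variable {ι : Type*} [DecidableEq ι]

local notation "F" => lp (fun _ : ι => K) 2

lemma lp2_ext {f g : F} (h : ∀ α, f α = g α) : f = g := lp.ext (funext h)

lemma single_apply'' (w : ι) (ξ : K) (β : ι) :
    (lp.single 2 w ξ : F) β = if β = w then ξ else 0 := by
  rw [lp.single_apply]
  split_ifs with h
  · subst h; exact Pi.single_eq_same _ _
  · rw [Pi.single_apply, if_neg h]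

lemma lp2_hasSum_norm_sq (f : F) : HasSum (fun α => ‖f α‖ ^ 2) (‖f‖ ^ 2) := by
  have h := lp.hasSum_norm (p := 2) (by norm_num) f
  simp only [ENNReal.toReal_ofNat] at h
  have e : ∀ x : ℝ, x ^ (2 : ℝ) = x ^ 2 := fun x => by
    rw [show (2:ℝ) = ((2:ℕ):ℝ) by norm_num, Real.rpow_natCast]
  simpa only [e] using h

lemma lp2_norm_sq_eq (f : F) : ‖f‖ ^ 2 = ∑' α, ‖f α‖ ^ 2 :=
  (lp2_hasSum_norm_sq f).tsum_eq.symm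

end

section
variable {K : Type*} [NormedAddCommGroup K] [InnerProductSpace ℂ K] [CompleteSpace K]
variable {n : ℕ}

-- finite Cauchy-Schwarz for nonneg reals
lemma fin_cs (x y : Fin n → ℝ) (hx : ∀ i, 0 ≤ x i) (hy : ∀ i, 0 ≤ y i) :
    ∑ i, x i * y i ≤ Real.sqrt (∑ i, x i ^ 2) * Real.sqrt (∑ i, y i ^ 2) := by
  have h := Finset.sum_mul_sq_le_sq_mul_sq Finset.univ x y
  have h0 : (0:ℝ) ≤ ∑ i, x i * y i :=
    Finset.sum_nonneg fun i _ => mul_nonneg (hx i) (hy i)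
  calc ∑ i, x i * y i = Real.sqrt ((∑ i, x i * y i) ^ 2) := (Real.sqrt_sq h0).symm
    _ ≤ Real.sqrt ((∑ i, x i ^ 2) * (∑ i, y i ^ 2)) := Real.sqrt_le_sqrt h
    _ = _ := Real.sqrt_mul (Finset.sum_nonneg fun i _ => sq_nonneg _) _

lemma col_bound (b : Fin n → K →L[ℂ] K) (ξ : K) :
    ∑ i, ‖b i ξ‖ ^ 2 ≤ ‖∑ i, ContinuousLinearMap.adjoint (b i) * b i‖ * ‖ξ‖ ^ 2 := by
  set S := ∑ i, ContinuousLinearMap.adjoint (b i) * b i with hS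
  have h1 : (inner ℂ (S ξ) ξ : ℂ) = ∑ i, (inner ℂ (b i ξ) (b i ξ) : ℂ) := by
    rw [hS, ContinuousLinearMap.sum_apply, sum_inner]
    refine Finset.sum_congr rfl fun i _ => ?_
    rw [ContinuousLinearMap.mul_apply, ContinuousLinearMap.adjoint_inner_left]
  have h2 : ∑ i, ‖b i ξ‖ ^ 2 = RCLike.re (inner ℂ (S ξ) ξ : ℂ) := by
    rw [h1, map_sum]
    exact Finset.sum_congr rfl fun i _ => (inner_self_eq_norm_sq (𝕜 := ℂ) _).symm
  rw [h2]
  calc RCLike.re (inner ℂ (S ξ) ξ : ℂ) ≤ ‖(inner ℂ (S ξ) ξ : ℂ)‖ := RCLike.re_le_norm _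
    _ ≤ ‖S ξ‖ * ‖ξ‖ := norm_inner_le_norm _ _
    _ ≤ (‖S‖ * ‖ξ‖) * ‖ξ‖ := by
        gcongr; exact S.le_opNorm ξ
    _ = ‖S‖ * ‖ξ‖ ^ 2 := by ring

lemma CS_op (b : Fin n → K →L[ℂ] K) (c : ℝ) (hc : 0 ≤ c)
    (h : ∀ ξ : K, ∑ i, ‖b i ξ‖ ^ 2 ≤ c * ‖ξ‖ ^ 2) :
    ‖∑ i, ContinuousLinearMap.adjoint (b i) * b i‖ ≤ c := by
  set S := ∑ i, ContinuousLinearMap.adjoint (b i) * b i with hS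
  refine ContinuousLinearMap.opNorm_le_bound S hc fun ξ => ?_
  have hinner : ∀ η : K, (inner ℂ (S ξ) η : ℂ) = ∑ i, (inner ℂ (b i ξ) (b i η) : ℂ) := by
    intro η
    rw [hS, ContinuousLinearMap.sum_apply, sum_inner]
    refine Finset.sum_congr rfl fun i _ => ?_
    rw [ContinuousLinearMap.mul_apply, ContinuousLinearMap.adjoint_inner_left]
  have key : ∀ η : K, ‖(inner ℂ (S ξ) η : ℂ)‖ ≤ (Real.sqrt c * ‖ξ‖) * (Real.sqrt c * ‖η‖) := by
    intro η
    rw [hinner]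
    calc ‖∑ i, (inner ℂ (b i ξ) (b i η) : ℂ)‖ ≤ ∑ i, ‖(inner ℂ (b i ξ) (b i η) : ℂ)‖ :=
          norm_sum_le _ _
      _ ≤ ∑ i, ‖b i ξ‖ * ‖b i η‖ :=
          Finset.sum_le_sum fun i _ => norm_inner_le_norm _ _
      _ ≤ Real.sqrt (∑ i, ‖b i ξ‖ ^ 2) * Real.sqrt (∑ i, ‖b i η‖ ^ 2) :=
          fin_cs _ _ (fun i => norm_nonneg _) (fun i => norm_nonneg _)
      _ ≤ Real.sqrt (c * ‖ξ‖ ^ 2) * Real.sqrt (c * ‖η‖ ^ 2) := by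
          gcongr <;> [exact h ξ; exact h η]
      _ = (Real.sqrt c * ‖ξ‖) * (Real.sqrt c * ‖η‖) := by
          rw [Real.sqrt_mul hc, Real.sqrt_mul hc, Real.sqrt_sq (norm_nonneg _),
            Real.sqrt_sq (norm_nonneg _)]
  have hsq : ‖S ξ‖ ^ 2 ≤ c * ‖ξ‖ * ‖S ξ‖ := by
    have := key (S ξ)
    calc ‖S ξ‖ ^ 2 = RCLike.re (inner ℂ (S ξ) (S ξ) : ℂ) :=
          (inner_self_eq_norm_sq (𝕜 := ℂ) _).symm
      _ ≤ ‖(inner ℂ (S ξ) (S ξ) : ℂ)‖ := RCLike.re_le_norm _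
      _ ≤ (Real.sqrt c * ‖ξ‖) * (Real.sqrt c * ‖S ξ‖) := this
      _ = c * ‖ξ‖ * ‖S ξ‖ := by
          rw [show (Real.sqrt c * ‖ξ‖) * (Real.sqrt c * ‖S ξ‖)
            = (Real.sqrt c * Real.sqrt c) * ‖ξ‖ * ‖S ξ‖ by ring, Real.mul_self_sqrt hc]
  rcases eq_or_lt_of_le (norm_nonneg (S ξ)) with h0 | h0
  · rw [← h0]; positivity
  · nlinarith [hsq, h0, norm_nonneg ξ]

lemma row_bound (b : Fin n → K →L[ℂ] K) (ξ : Fin n → K) :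
    ‖∑ i, b i (ξ i)‖ ^ 2 ≤ ‖∑ i, b i * ContinuousLinearMap.adjoint (b i)‖ * ∑ i, ‖ξ i‖ ^ 2 := by
  set R := ∑ i, b i * ContinuousLinearMap.adjoint (b i) with hR
  set u := ∑ i, b i (ξ i) with hu
  have hc : (0:ℝ) ≤ ‖R‖ := norm_nonneg _
  have h1 : ∑ i, ‖ContinuousLinearMap.adjoint (b i) u‖ ^ 2 ≤ ‖R‖ * ‖u‖ ^ 2 := by
    have := col_bound (fun i => ContinuousLinearMap.adjoint (b i)) u
    simpa only [ContinuousLinearMap.adjoint_adjoint] using this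
  have h2 : ‖u‖ ^ 2 ≤ Real.sqrt (∑ i, ‖ξ i‖ ^ 2) * (Real.sqrt ‖R‖ * ‖u‖) := by
    calc ‖u‖ ^ 2 = RCLike.re (inner ℂ u u : ℂ) := (inner_self_eq_norm_sq (𝕜 := ℂ) _).symm
      _ ≤ ‖(inner ℂ u u : ℂ)‖ := RCLike.re_le_norm _
      _ = ‖∑ i, (inner ℂ (ξ i) (ContinuousLinearMap.adjoint (b i) u) : ℂ)‖ := by
          rw [hu, sum_inner]
          congr 1
          refine Finset.sum_congr rfl fun i _ => ?_
          rw [ContinuousLinearMap.adjoint_inner_right]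
      _ ≤ ∑ i, ‖ξ i‖ * ‖ContinuousLinearMap.adjoint (b i) u‖ :=
          le_trans (norm_sum_le _ _) (Finset.sum_le_sum fun i _ => norm_inner_le_norm _ _)
      _ ≤ Real.sqrt (∑ i, ‖ξ i‖ ^ 2) * Real.sqrt (∑ i, ‖ContinuousLinearMap.adjoint (b i) u‖ ^ 2) :=
          fin_cs _ _ (fun i => norm_nonneg _) (fun i => norm_nonneg _)
      _ ≤ Real.sqrt (∑ i, ‖ξ i‖ ^ 2) * Real.sqrt (‖R‖ * ‖u‖ ^ 2) := by
          gcongr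
      _ = Real.sqrt (∑ i, ‖ξ i‖ ^ 2) * (Real.sqrt ‖R‖ * ‖u‖) := by
          rw [Real.sqrt_mul hc, Real.sqrt_sq (norm_nonneg _)]
  rcases eq_or_lt_of_le (norm_nonneg u) with h0 | h0
  · have hnn : (0:ℝ) ≤ ∑ i, ‖ξ i‖ ^ 2 := Finset.sum_nonneg fun i _ => sq_nonneg _
    rw [← h0]
    nlinarith [mul_nonneg hc hnn]
  · have h3 : ‖u‖ ≤ Real.sqrt (∑ i, ‖ξ i‖ ^ 2) * Real.sqrt ‖R‖ := by
      have := h2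
      rw [show Real.sqrt (∑ i, ‖ξ i‖ ^ 2) * (Real.sqrt ‖R‖ * ‖u‖)
        = (Real.sqrt (∑ i, ‖ξ i‖ ^ 2) * Real.sqrt ‖R‖) * ‖u‖ by ring, sq] at this
      exact le_of_mul_le_mul_right this h0
    calc ‖u‖ ^ 2 ≤ (Real.sqrt (∑ i, ‖ξ i‖ ^ 2) * Real.sqrt ‖R‖) ^ 2 :=
          pow_le_pow_left₀ (norm_nonneg _) h3 2
      _ = ‖R‖ * ∑ i, ‖ξ i‖ ^ 2 := by
          rw [mul_pow, Real.sq_sqrt (Finset.sum_nonneg fun i _ => sq_nonneg _),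
            Real.sq_sqrt hc]; ring
end

/-- The two-sided norm estimate expressing that the operator space spanned by
`G_1, …, G_n` (`G_i = S_i + S_i^*` on the `q`-commuting Fock space) is completely
isomorphic to the Hilbertian operator space `E_n`:
`max(‖Σ a_i a_i^*‖^{1/2}, ‖Σ a_i^* a_i‖^{1/2}) ≤ ‖Σ a_i ⊗ G_i‖ ≤
 2 max(‖Σ a_i a_i^*‖^{1/2}, ‖Σ a_i^* a_i‖^{1/2})`,
realized on `F_q ≅ Γ_q(ℂⁿ) ⊗ K ⊆ ℓ²(Λ̃; K)`. -/
theorem stmt19 {K : Type*} [NormedAddCommGroup K] [InnerProductSpace ℂ K] [CompleteSpace K]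
    {n : ℕ} (hn : 2 ≤ n) (q : Fin n → Fin n → ℂ)
    (hq1 : ∀ i, q i i = 1) (hq2 : ∀ i j, q j i = (q i j)⁻¹) (hq3 : ∀ i j, ‖q i j‖ = 1)
    (a : Fin n → K →L[ℂ] K)
    -- the ampliated creation operators `Ṽ_i` on `F = ℓ²(Λ̃; K)`
    (Vt : Fin n → lp (fun _ : List (Fin n) => K) 2 →L[ℂ] lp (fun _ : List (Fin n) => K) 2)
    (hVt1 : ∀ (i : Fin n) (f : lp (fun _ : List (Fin n) => K) 2) (α : List (Fin n)),
      Vt i f (i :: α) = f α)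
    (hVt2 : ∀ (i : Fin n) (f : lp (fun _ : List (Fin n) => K) 2) (β : List (Fin n)),
      (∀ α : List (Fin n), β ≠ i :: α) → Vt i f β = 0)
    -- the subspace `F_q ≅ Γ_q(ℂⁿ) ⊗ K` of `q`-symmetric functions
    (Fq : Submodule ℂ (lp (fun _ : List (Fin n) => K) 2)) [CompleteSpace ↥Fq]
    (hFq : (Fq : Set (lp (fun _ : List (Fin n) => K) 2))
      = {f | ∀ (m : ℕ) (α : Fin m → Fin n) (σ : Equiv.Perm (Fin m)),
          f (List.ofFn fun i => α (σ⁻¹ i)) = qSigma q α σ • f (List.ofFn α)})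
    (hVinv : ∀ (i : Fin n), ∀ f ∈ Fq, ContinuousLinearMap.adjoint (Vt i) f ∈ Fq)
    -- the pointwise operators `â_i`, which leave `F_q` invariant
    (ahat : Fin n → lp (fun _ : List (Fin n) => K) 2 →L[ℂ] lp (fun _ : List (Fin n) => K) 2)
    (hahat : ∀ (i : Fin n) (f : lp (fun _ : List (Fin n) => K) 2) (α : List (Fin n)),
      ahat i f α = a i (f α))
    (hainv : ∀ (i : Fin n), ∀ f ∈ Fq, ahat i f ∈ Fq)
    -- the orthogonal projection `Q` of `F` onto `F_q`
    (Q : lp (fun _ : List (Fin n) => K) 2 →L[ℂ] lp (fun _ : List (Fin n) => K) 2)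
    (hQmem : ∀ x, Q x ∈ Fq) (hQfix : ∀ x ∈ Fq, Q x = x)
    (hQorth : ∀ x, ∀ y ∈ Fq, (inner ℂ (x - Q x) y : ℂ) = 0) :
    letI Gt : Fin n → ↥Fq →L[ℂ] ↥Fq := fun i =>
      (Q.codRestrict Fq hQmem).comp
        (((Vt i + ContinuousLinearMap.adjoint (Vt i)).comp Fq.subtypeL))
    letI aRes : Fin n → ↥Fq →L[ℂ] ↥Fq := fun i =>
      ((ahat i).comp Fq.subtypeL).codRestrict Fq (fun x => hainv i _ x.2)
    max (Real.sqrt ‖∑ i, a i * ContinuousLinearMap.adjoint (a i)‖)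
        (Real.sqrt ‖∑ i, ContinuousLinearMap.adjoint (a i) * a i‖)
      ≤ ‖∑ i, aRes i * Gt i‖ ∧
    ‖∑ i, aRes i * Gt i‖
      ≤ 2 * max (Real.sqrt ‖∑ i, a i * ContinuousLinearMap.adjoint (a i)‖)
          (Real.sqrt ‖∑ i, ContinuousLinearMap.adjoint (a i) * a i‖) := by
  classical
  set T := ∑ i, ((ahat i).comp Fq.subtypeL).codRestrict Fq (fun x => hainv i _ x.2) *
      ((Q.codRestrict Fq hQmem).comp
        (((Vt i + ContinuousLinearMap.adjoint (Vt i)).comp Fq.subtypeL))) with hT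
  set F2 := lp (fun _ : List (Fin n) => K) 2 with hF2
  -- abbreviations
  set A : F2 →L[ℂ] F2 := ∑ i, (ahat i).comp (Vt i) with hA
  set B : F2 →L[ℂ] F2 := ∑ i, (ahat i).comp (ContinuousLinearMap.adjoint (Vt i)) with hB
  -- membership via pointwise operators
  have mem_pointwise : ∀ (b : K →L[ℂ] K) (g h : F2), (∀ α, h α = b (g α)) → g ∈ Fq → h ∈ Fq := by
    intro b g h hp hg
    have hg' : g ∈ (Fq : Set F2) := hg
    rw [hFq] at hg'
    rw [← SetLike.mem_coe, hFq]
    intro m α σ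
    rw [hp, hp, hg' m α σ, map_smul]
  -- `Vt i` on singles
  have hVt_single : ∀ (i : Fin n) (α : List (Fin n)) (ξ : K),
      Vt i (lp.single 2 α ξ) = lp.single 2 (i :: α) ξ := by
    intro i α ξ
    apply lp2_ext
    intro β
    match β with
    | [] =>
      rw [hVt2 i _ [] (by simp), single_apply'']
      simp
    | j :: t =>
      by_cases hj : j = i
      · subst hj
        rw [hVt1, single_apply'', single_apply'']
        simp [List.cons.injEq]
      · rw [hVt2 i _ (j :: t) (by simp [List.cons.injEq, hj]), single_apply'']
        simp [List.cons.injEq, hj]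
  -- adjoint of Vt acts by left shift
  have hVtadj : ∀ (i : Fin n) (f : F2) (α : List (Fin n)),
      ContinuousLinearMap.adjoint (Vt i) f α = f (i :: α) := by
    intro i f α
    refine ext_inner_right ℂ fun ξ => ?_
    rw [← lp.inner_single_right, ← lp.inner_single_right,
      ContinuousLinearMap.adjoint_inner_left, hVt_single]
  -- `ahat i` on singles
  have hahat_single : ∀ (i : Fin n) (α : List (Fin n)) (ξ : K),
      ahat i (lp.single 2 α ξ) = lp.single 2 α (a i ξ) := by
    intro i α ξ
    apply lp2_ext
    intro β
    rw [hahat, single_apply'', single_apply'']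
    split_ifs <;> simp
  -- adjoint of `ahat i` acts pointwise by the adjoint
  have hahat_adj : ∀ (i : Fin n) (f : F2) (α : List (Fin n)),
      ContinuousLinearMap.adjoint (ahat i) f α = ContinuousLinearMap.adjoint (a i) (f α) := by
    intro i f α
    refine ext_inner_right ℂ fun ξ => ?_
    rw [← lp.inner_single_right, ContinuousLinearMap.adjoint_inner_left, hahat_single,
      lp.inner_single_right, ContinuousLinearMap.adjoint_inner_left]
  -- Q facts
  have hQ1 : ∀ (x : F2), ∀ y ∈ Fq, (inner ℂ y (x - Q x) : ℂ) = 0 := by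
    intro x y hy
    have h := congrArg (starRingEnd ℂ) (hQorth x y hy)
    simpa [inner_conj_symm] using h
  have hQdual : ∀ (x : F2), ∀ y ∈ Fq, (inner ℂ y (Q x) : ℂ) = inner ℂ y x := by
    intro x y hy
    have := hQ1 x y hy
    rw [inner_sub_right] at this
    linear_combination -this
  have hQzero : ∀ z : F2, (∀ y ∈ Fq, (inner ℂ z y : ℂ) = 0) → Q z = 0 := by
    intro z hz
    have h1 : (inner ℂ (Q z) (Q z) : ℂ) = inner ℂ (Q z - z) (Q z) + inner ℂ z (Q z) := by
      rw [← inner_add_left, sub_add_cancel]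
    have h2 : (inner ℂ (Q z - z) (Q z) : ℂ) = 0 := by
      have := hQorth z (Q z) (hQmem z)
      rw [show Q z - z = -(z - Q z) by abel, inner_neg_left, this, neg_zero]
    have h3 : (inner ℂ z (Q z) : ℂ) = 0 := hz (Q z) (hQmem z)
    rw [h2, h3, add_zero] at h1
    exact inner_self_eq_zero.mp h1
  have hQnorm : ∀ z : F2, ‖Q z‖ ≤ ‖z‖ := by
    intro z
    have h0 : (inner ℂ (z - Q z) (Q z) : ℂ) = 0 := hQorth z (Q z) (hQmem z)
    have h1 : (inner ℂ z (Q z) : ℂ) = inner ℂ (Q z) (Q z) := by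
      rw [inner_sub_left] at h0
      linear_combination h0
    have h2 : ‖Q z‖ ^ 2 ≤ ‖z‖ * ‖Q z‖ := by
      calc ‖Q z‖ ^ 2 = RCLike.re (inner ℂ (Q z) (Q z) : ℂ) :=
            (inner_self_eq_norm_sq (𝕜 := ℂ) _).symm
        _ = RCLike.re (inner ℂ z (Q z) : ℂ) := by rw [h1]
        _ ≤ ‖(inner ℂ z (Q z) : ℂ)‖ := RCLike.re_le_norm _
        _ ≤ ‖z‖ * ‖Q z‖ := norm_inner_le_norm _ _
    rcases eq_or_lt_of_le (norm_nonneg (Q z)) with h | h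
    · rw [← h]; exact norm_nonneg z
    · nlinarith
  have hQcomm : ∀ (i : Fin n) (x : F2), Q (ahat i x) = ahat i (Q x) := by
    intro i x
    have hsplit : ahat i x = ahat i (x - Q x) + ahat i (Q x) := by
      rw [← map_add, sub_add_cancel]
    have h1 : Q (ahat i (Q x)) = ahat i (Q x) := hQfix _ (hainv i _ (hQmem x))
    have h2 : Q (ahat i (x - Q x)) = 0 := by
      apply hQzero
      intro y hy
      have hmem : ContinuousLinearMap.adjoint (ahat i) y ∈ Fq :=
        mem_pointwise (ContinuousLinearMap.adjoint (a i)) y _ (fun α => hahat_adj i y α) hy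
      have e1 : (inner ℂ (ahat i (x - Q x)) y : ℂ)
          = starRingEnd ℂ (inner ℂ (ContinuousLinearMap.adjoint (ahat i) y) (x - Q x) : ℂ) := by
        rw [ContinuousLinearMap.adjoint_inner_left, inner_conj_symm]
      rw [e1, ← inner_conj_symm, hQorth x _ hmem]
      simp
    rw [hsplit, map_add, h1, h2, zero_add]
  -- pointwise values of A and B
  have sum_apply_pt : ∀ (g : Fin n → F2 →L[ℂ] F2) (f : F2) (β : List (Fin n)),
      ((∑ i, g i) f) β = ∑ i, (g i f) β := by
    intro g f β
    rw [ContinuousLinearMap.sum_apply]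
    rw [lp.coeFn_sum]
    exact Finset.sum_apply β Finset.univ _
  have hAnil : ∀ f : F2, A f [] = 0 := by
    intro f
    rw [hA, sum_apply_pt]
    refine Finset.sum_eq_zero fun i _ => ?_
    rw [ContinuousLinearMap.comp_apply, hahat, hVt2 i f [] (by simp), map_zero]
  have hAcons : ∀ (f : F2) (j : Fin n) (t : List (Fin n)), A f (j :: t) = a j (f t) := by
    intro f j t
    rw [hA, sum_apply_pt]
    rw [Finset.sum_eq_single j]
    · rw [ContinuousLinearMap.comp_apply, hahat, hVt1]
    · intro i _ hij
      rw [ContinuousLinearMap.comp_apply, hahat,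
        hVt2 i f (j :: t) (fun α => by simp [List.cons.injEq, (Ne.symm hij)]), map_zero]
    · intro h; exact absurd (Finset.mem_univ j) h
  have hBpt : ∀ (f : F2) (t : List (Fin n)), B f t = ∑ j, a j (f (j :: t)) := by
    intro f t
    rw [hB, sum_apply_pt]
    refine Finset.sum_congr rfl fun j _ => ?_
    rw [ContinuousLinearMap.comp_apply, hahat, hVtadj]
  -- the key identity for T
  have hTapp : ∀ x : ↥Fq, ((T x : ↥Fq) : F2) = Q (A (x : F2) + B (x : F2)) := by
    intro x
    have h1 : ((T x : ↥Fq) : F2)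
        = ∑ i, ahat i (Q ((Vt i + ContinuousLinearMap.adjoint (Vt i)) (x : F2))) := by
      rw [hT, ContinuousLinearMap.sum_apply]
      rw [Submodule.coe_sum]
      rfl
    rw [h1]
    have h2 : ∀ i : Fin n, ahat i (Q ((Vt i + ContinuousLinearMap.adjoint (Vt i)) (x : F2)))
        = Q (ahat i (Vt i (x : F2)) + ahat i (ContinuousLinearMap.adjoint (Vt i) (x : F2))) := by
      intro i
      rw [← hQcomm, ContinuousLinearMap.add_apply, map_add]
    simp only [h2]
    rw [← map_sum, Finset.sum_add_distrib]
    congr 1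
    rw [hA, hB, ContinuousLinearMap.sum_apply, ContinuousLinearMap.sum_apply]
    simp [ContinuousLinearMap.comp_apply]
  -- membership of short singles in Fq
  have mem_single : ∀ (w : List (Fin n)), w.length ≤ 1 → ∀ ξ : K,
      (lp.single 2 w ξ : F2) ∈ Fq := by
    intro w hw ξ
    rw [← SetLike.mem_coe, hFq]
    intro m α σ
    have hid : m ≤ 1 → ∀ i : Fin m, σ⁻¹ i = i := by
      intro hm i
      have : Subsingleton (Fin m) := by
        interval_cases m
        · exact Fin.subsingleton_zero
        · exact Fin.subsingleton_one
      exact Subsingleton.elim _ _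
    by_cases hofn : List.ofFn α = w
    · have hm : m ≤ 1 := by
        have : (List.ofFn α).length = w.length := by rw [hofn]
        rw [List.length_ofFn] at this
        omega
      have hσ := hid hm
      have hfn : (List.ofFn fun i => α (σ⁻¹ i)) = List.ofFn α := by
        congr 1
        funext i
        rw [hσ i]
      have hqone : qSigma q α σ = 1 := by
        unfold qSigma
        rw [Finset.filter_false_of_mem, Finset.prod_empty]
        intro p _
        have : Subsingleton (Fin m) := by
          interval_cases m
          · exact Fin.subsingleton_zero
          · exact Fin.subsingleton_one
        rw [Subsingleton.elim p.1 p.2]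
        simp
      rw [hfn, hqone, one_smul]
    · have hz : (lp.single 2 w ξ : F2) (List.ofFn α) = 0 := by
        rw [single_apply'', if_neg hofn]
      rw [hz, smul_zero, single_apply'', if_neg]
      intro hcon
      have hm : m ≤ 1 := by
        have : (List.ofFn fun i => α (σ⁻¹ i)).length = w.length := by rw [hcon]
        rw [List.length_ofFn] at this
        omega
      have hσ := hid hm
      have hfn : (List.ofFn fun i => α (σ⁻¹ i)) = List.ofFn α := by
        congr 1
        funext i
        rw [hσ i]
      rw [hfn] at hcon
      exact hofn hcon
  have mem_sum_single : ∀ η : Fin n → K, (∑ i, lp.single 2 [i] (η i) : F2) ∈ Fq :=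
    fun η => Submodule.sum_mem _ fun i _ => mem_single [i] (by simp) (η i)
  -- norms of singles and of sums of singles
  have hnorm_single : ∀ (w : List (Fin n)) (ξ : K), ‖(lp.single 2 w ξ : F2)‖ = ‖ξ‖ := by
    intro w ξ
    have h2 : ‖(lp.single 2 w ξ : F2)‖ ^ 2 = ‖ξ‖ ^ 2 := by
      rw [← inner_self_eq_norm_sq (𝕜 := ℂ) (lp.single 2 w ξ : F2),
        lp.inner_single_left, single_apply'', if_pos rfl, inner_self_eq_norm_sq (𝕜 := ℂ)]
    calc ‖(lp.single 2 w ξ : F2)‖ = Real.sqrt (‖(lp.single 2 w ξ : F2)‖ ^ 2) :=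
          (Real.sqrt_sq (norm_nonneg _)).symm
      _ = Real.sqrt (‖ξ‖ ^ 2) := by rw [h2]
      _ = ‖ξ‖ := Real.sqrt_sq (norm_nonneg _)
  have hsum_single_apply : ∀ (η : Fin n → K) (j : Fin n),
      (∑ i, lp.single 2 [i] (η i) : F2) [j] = η j := by
    intro η j
    rw [lp.coeFn_sum, Finset.sum_apply]
    rw [Finset.sum_eq_single j]
    · rw [single_apply'', if_pos rfl]
    · intro i _ hij
      rw [single_apply'', if_neg (by simp [List.cons.injEq, Ne.symm hij])]
    · intro h; exact absurd (Finset.mem_univ j) h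
  have hnorm_sum_single : ∀ η : Fin n → K,
      ‖(∑ i, lp.single 2 [i] (η i) : F2)‖ ^ 2 = ∑ i, ‖η i‖ ^ 2 := by
    intro η
    set w : F2 := ∑ i, lp.single 2 [i] (η i) with hwdef
    rw [← inner_self_eq_norm_sq (𝕜 := ℂ) w]
    have : (inner ℂ w w : ℂ) = ∑ i, (inner ℂ (η i) (η i) : ℂ) := by
      calc (inner ℂ w w : ℂ) = ∑ i, (inner ℂ (lp.single 2 [i] (η i) : F2) w : ℂ) := by
            rw [hwdef, sum_inner]
        _ = ∑ i, (inner ℂ (η i) (η i) : ℂ) := by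
            refine Finset.sum_congr rfl fun i _ => ?_
            rw [lp.inner_single_left, hsum_single_apply]
    rw [this, map_sum]
    exact Finset.sum_congr rfl fun i _ => inner_self_eq_norm_sq (𝕜 := ℂ) _
  -- column and row constants
  set cR := Real.sqrt ‖∑ i, a i * ContinuousLinearMap.adjoint (a i)‖ with hcR
  set cA := Real.sqrt ‖∑ i, ContinuousLinearMap.adjoint (a i) * a i‖ with hcA
  have hcA0 : 0 ≤ cA := Real.sqrt_nonneg _
  have hcR0 : 0 ≤ cR := Real.sqrt_nonneg _
  have hSnorm : ∀ ξ : K, ∑ i, ‖a i ξ‖ ^ 2 ≤ cA ^ 2 * ‖ξ‖ ^ 2 := by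
    intro ξ
    rw [hcA, Real.sq_sqrt (norm_nonneg _)]
    exact col_bound a ξ
  -- injection of nonempty words
  have hinj : Function.Injective (fun p : Fin n × List (Fin n) => p.1 :: p.2) := by
    intro p r h
    simp only [List.cons.injEq] at h
    exact Prod.ext h.1 h.2
  -- upper bound for A
  have hAle : ∀ f : F2, ‖A f‖ ≤ cA * ‖f‖ := by
    intro f
    have hf := lp2_hasSum_norm_sq f
    have hg := lp2_hasSum_norm_sq (A f)
    have hzero : ∀ β ∉ Set.range (fun p : Fin n × List (Fin n) => p.1 :: p.2),
        ‖A f β‖ ^ 2 = 0 := by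
      intro β hβ
      match β with
      | [] => rw [hAnil]; simp
      | j :: t => exact absurd ⟨(j, t), rfl⟩ hβ
    have hcomp : HasSum ((fun β => ‖A f β‖ ^ 2) ∘ (fun p : Fin n × List (Fin n) => p.1 :: p.2))
        (‖A f‖ ^ 2) := (hinj.hasSum_iff hzero).mpr hg
    have heq : ((fun β => ‖A f β‖ ^ 2) ∘ (fun p : Fin n × List (Fin n) => p.1 :: p.2))
        = fun p : Fin n × List (Fin n) => ‖a p.1 (f p.2)‖ ^ 2 := by
      funext p
      simp only [Function.comp_apply]
      rw [hAcons]
    rw [heq] at hcomp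
    have hsummable := hcomp.summable
    have hterm : ∀ j : Fin n, Summable fun t : List (Fin n) => ‖a j (f t)‖ ^ 2 := by
      intro j
      have := hsummable.comp_injective (i := fun t : List (Fin n) => (j, t))
        (fun s t h => by simpa using h)
      exact this
    have htsum : ‖A f‖ ^ 2 = ∑' t : List (Fin n), ∑ j, ‖a j (f t)‖ ^ 2 := by
      rw [← hcomp.tsum_eq, Summable.tsum_prod' hsummable hterm,
        tsum_fintype (fun j : Fin n => ∑' t : List (Fin n), ‖a j (f t)‖ ^ 2),
        ← Summable.tsum_finsetSum (fun j _ => hterm j)]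
    have hle : ‖A f‖ ^ 2 ≤ cA ^ 2 * ‖f‖ ^ 2 := by
      rw [htsum]
      calc ∑' t : List (Fin n), ∑ j, ‖a j (f t)‖ ^ 2
          ≤ ∑' t : List (Fin n), cA ^ 2 * ‖f t‖ ^ 2 := by
            refine Summable.tsum_le_tsum (fun t => hSnorm (f t)) ?_ ?_
            · exact summable_sum fun j _ => hterm j
            · exact hf.summable.mul_left _
        _ = cA ^ 2 * ∑' t : List (Fin n), ‖f t‖ ^ 2 := tsum_mul_left
        _ = cA ^ 2 * ‖f‖ ^ 2 := by rw [hf.tsum_eq]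
    calc ‖A f‖ = Real.sqrt (‖A f‖ ^ 2) := (Real.sqrt_sq (norm_nonneg _)).symm
      _ ≤ Real.sqrt (cA ^ 2 * ‖f‖ ^ 2) := Real.sqrt_le_sqrt hle
      _ = cA * ‖f‖ := by
          rw [Real.sqrt_mul (sq_nonneg _), Real.sqrt_sq hcA0, Real.sqrt_sq (norm_nonneg _)]
  -- upper bound for B
  have hBle : ∀ f : F2, ‖B f‖ ≤ cR * ‖f‖ := by
    intro f
    have hfsum := lp2_hasSum_norm_sq f
    have hg := lp2_hasSum_norm_sq (B f)
    have heq : (fun t => ‖B f t‖ ^ 2) = fun t : List (Fin n) => ‖∑ j, a j (f (j :: t))‖ ^ 2 := by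
      funext t
      rw [hBpt]
    rw [heq] at hg
    have hfe : Summable (fun p : Fin n × List (Fin n) => ‖f (p.1 :: p.2)‖ ^ 2) := by
      have := hfsum.summable.comp_injective hinj
      exact this
    have hfj : ∀ j : Fin n, Summable fun t : List (Fin n) => ‖f (j :: t)‖ ^ 2 := by
      intro j
      have := hfe.comp_injective (i := fun t : List (Fin n) => (j, t))
        (fun s t h => by simpa using h)
      exact this
    have h1 : ‖B f‖ ^ 2 ≤ ∑' t : List (Fin n), cR ^ 2 * ∑ j, ‖f (j :: t)‖ ^ 2 := by
      rw [← hg.tsum_eq]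
      refine Summable.tsum_le_tsum (fun t => ?_) hg.summable ?_
      · rw [hcR, Real.sq_sqrt (norm_nonneg _)]
        exact row_bound a fun j => f (j :: t)
      · exact (summable_sum fun j _ => hfj j).mul_left _
    have h2 : ∑' t : List (Fin n), ∑ j, ‖f (j :: t)‖ ^ 2
        = ∑' p : Fin n × List (Fin n), ‖f (p.1 :: p.2)‖ ^ 2 := by
      rw [Summable.tsum_prod' hfe hfj,
        tsum_fintype (fun j : Fin n => ∑' t : List (Fin n), ‖f (j :: t)‖ ^ 2),
        ← Summable.tsum_finsetSum (fun j _ => hfj j)]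
    have h3 : ∑' p : Fin n × List (Fin n), ‖f (p.1 :: p.2)‖ ^ 2 ≤ ‖f‖ ^ 2 := by
      rw [← hfsum.tsum_eq]
      exact Summable.tsum_le_tsum_of_inj _ hinj (fun c _ => sq_nonneg _) (fun p => le_rfl)
        hfe hfsum.summable
    have hle : ‖B f‖ ^ 2 ≤ cR ^ 2 * ‖f‖ ^ 2 := by
      calc ‖B f‖ ^ 2 ≤ ∑' t : List (Fin n), cR ^ 2 * ∑ j, ‖f (j :: t)‖ ^ 2 := h1
        _ = cR ^ 2 * ∑' t : List (Fin n), ∑ j, ‖f (j :: t)‖ ^ 2 := tsum_mul_left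
        _ ≤ cR ^ 2 * ‖f‖ ^ 2 := by
            have := h2 ▸ h3
            exact mul_le_mul_of_nonneg_left this (sq_nonneg _)
    calc ‖B f‖ = Real.sqrt (‖B f‖ ^ 2) := (Real.sqrt_sq (norm_nonneg _)).symm
      _ ≤ Real.sqrt (cR ^ 2 * ‖f‖ ^ 2) := Real.sqrt_le_sqrt hle
      _ = cR * ‖f‖ := by
          rw [Real.sqrt_mul (sq_nonneg _), Real.sqrt_sq hcR0, Real.sqrt_sq (norm_nonneg _)]
  -- the upper bound for T
  have hTub : ‖T‖ ≤ cR + cA := by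
    refine ContinuousLinearMap.opNorm_le_bound _ (by positivity) fun x => ?_
    have hx : ‖x‖ = ‖(x : F2)‖ := rfl
    have h0 : ‖T x‖ = ‖((T x : ↥Fq) : F2)‖ := rfl
    rw [h0, hTapp x, hx]
    calc ‖Q (A (x : F2) + B (x : F2))‖ ≤ ‖A (x : F2) + B (x : F2)‖ := hQnorm _
      _ ≤ ‖A (x : F2)‖ + ‖B (x : F2)‖ := norm_add_le _ _
      _ ≤ cA * ‖(x : F2)‖ + cR * ‖(x : F2)‖ := add_le_add (hAle _) (hBle _)
      _ = (cR + cA) * ‖(x : F2)‖ := by ring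
  -- lower bound: column part
  have hTlow : ∀ ξ : K, ∑ i, ‖a i ξ‖ ^ 2 ≤ ‖T‖ ^ 2 * ‖ξ‖ ^ 2 := by
    intro ξ
    set v : F2 := lp.single 2 ([] : List (Fin n)) ξ with hvdef
    have hv : v ∈ Fq := mem_single [] (by simp) ξ
    set v' : ↥Fq := ⟨v, hv⟩ with hv'def
    have hAv : A v = ∑ i, lp.single 2 [i] (a i ξ) := by
      apply lp2_ext
      intro β
      match β with
      | [] =>
        rw [hAnil]
        rw [lp.coeFn_sum, Finset.sum_apply]
        symm
        refine Finset.sum_eq_zero fun i _ => ?_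
        rw [single_apply'', if_neg (by simp)]
      | j :: t =>
        rw [hAcons]
        by_cases ht : t = ([] : List (Fin n))
        · subst ht
          rw [hvdef, single_apply'', if_pos rfl, hsum_single_apply]
        · rw [hvdef, single_apply'', if_neg ht, map_zero]
          rw [lp.coeFn_sum, Finset.sum_apply]
          symm
          refine Finset.sum_eq_zero fun i _ => ?_
          rw [single_apply'', if_neg (by simp [List.cons.injEq, ht])]
    have hBv : B v = 0 := by
      apply lp2_ext
      intro t
      rw [hBpt]
      have : ∀ j : Fin n, v (j :: t) = 0 := fun j => by
        rw [hvdef, single_apply'', if_neg (by simp)]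
      simp only [this, map_zero, Finset.sum_const_zero]
      exact (lp.coeFn_zero (E := fun _ : List (Fin n) => K) 2 ▸ rfl : (0 : F2) t = 0).symm
    have hTv : ((T v' : ↥Fq) : F2) = ∑ i, lp.single 2 [i] (a i ξ) := by
      rw [hTapp, hAv, hBv, add_zero, hQfix _ (mem_sum_single fun i => a i ξ)]
    have h1 : ‖T v'‖ ^ 2 = ∑ i, ‖a i ξ‖ ^ 2 := by
      have : ‖T v'‖ = ‖((T v' : ↥Fq) : F2)‖ := rfl
      rw [this, hTv]
      exact hnorm_sum_single _
    have h2 : ‖T v'‖ ≤ ‖T‖ * ‖ξ‖ := by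
      have hb := T.le_opNorm v'
      have : ‖v'‖ = ‖ξ‖ := by
        have : ‖v'‖ = ‖v‖ := rfl
        rw [this, hvdef, hnorm_single]
      rw [this] at hb
      exact hb
    calc ∑ i, ‖a i ξ‖ ^ 2 = ‖T v'‖ ^ 2 := h1.symm
      _ ≤ (‖T‖ * ‖ξ‖) ^ 2 := pow_le_pow_left₀ (norm_nonneg _) h2 2
      _ = ‖T‖ ^ 2 * ‖ξ‖ ^ 2 := by ring
  have hcol : cA ≤ ‖T‖ := by
    have h : ‖∑ i, ContinuousLinearMap.adjoint (a i) * a i‖ ≤ ‖T‖ ^ 2 :=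
      CS_op a (‖T‖ ^ 2) (sq_nonneg (‖T‖)) hTlow
    rw [hcA]
    calc Real.sqrt ‖∑ i, ContinuousLinearMap.adjoint (a i) * a i‖
        ≤ Real.sqrt (‖T‖ ^ 2) := Real.sqrt_le_sqrt h
      _ = ‖T‖ := Real.sqrt_sq (norm_nonneg T)
  -- lower bound: row part
  have hTlowR : ∀ ξ : K, ∑ i, ‖ContinuousLinearMap.adjoint (a i) ξ‖ ^ 2 ≤ ‖T‖ ^ 2 * ‖ξ‖ ^ 2 := by
    intro ξ
    set v : F2 := lp.single 2 ([] : List (Fin n)) ξ with hvdef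
    have hv : v ∈ Fq := mem_single [] (by simp) ξ
    set v' : ↥Fq := ⟨v, hv⟩ with hv'def
    set w : F2 := ∑ i, lp.single 2 [i] (ContinuousLinearMap.adjoint (a i) ξ) with hwdef
    have hw : w ∈ Fq := mem_sum_single _
    set w' : ↥Fq := ⟨w, hw⟩ with hw'def
    have key : ∀ g : ↥Fq, (inner ℂ v' (T g) : ℂ) = inner ℂ w' g := by
      intro g
      rw [Submodule.coe_inner, Submodule.coe_inner, hTapp]
      rw [hQdual _ v hv, inner_add_right]
      have e1 : (inner ℂ v (A (g : F2)) : ℂ) = 0 := by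
        rw [hvdef, lp.inner_single_left, hAnil, inner_zero_right]
      have e2 : (inner ℂ v (B (g : F2)) : ℂ) = inner ℂ w ((g : ↥Fq) : F2) := by
        rw [hvdef, lp.inner_single_left, hBpt, inner_sum, hwdef, sum_inner]
        refine Finset.sum_congr rfl fun j _ => ?_
        rw [lp.inner_single_left, ContinuousLinearMap.adjoint_inner_left]
      rw [e1, e2, zero_add]
    have hwnorm : ‖w'‖ ^ 2 = ∑ i, ‖ContinuousLinearMap.adjoint (a i) ξ‖ ^ 2 := by
      have : ‖w'‖ = ‖w‖ := rfl
      rw [this, hwdef]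
      exact hnorm_sum_single _
    have hwle : ‖w'‖ ≤ ‖T‖ * ‖ξ‖ := by
      have hsq : ‖w'‖ ^ 2 ≤ (‖T‖ * ‖ξ‖) * ‖w'‖ := by
        calc ‖w'‖ ^ 2 = RCLike.re (inner ℂ w' w' : ℂ) := (inner_self_eq_norm_sq (𝕜 := ℂ) _).symm
          _ = RCLike.re (inner ℂ v' (T w') : ℂ) := by rw [key w']
          _ ≤ ‖(inner ℂ v' (T w') : ℂ)‖ := RCLike.re_le_norm _
          _ ≤ ‖v'‖ * ‖T w'‖ := norm_inner_le_norm (𝕜 := ℂ) v' (T w')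
          _ ≤ ‖v'‖ * (‖T‖ * ‖w'‖) := by
              have := T.le_opNorm w'
              exact mul_le_mul_of_nonneg_left this (norm_nonneg _)
          _ = (‖T‖ * ‖v'‖) * ‖w'‖ := by ring
          _ = (‖T‖ * ‖ξ‖) * ‖w'‖ := by
              have : ‖v'‖ = ‖ξ‖ := by
                have h' : ‖v'‖ = ‖v‖ := rfl
                rw [h', hvdef, hnorm_single]
              rw [this]
      rcases eq_or_lt_of_le (norm_nonneg w') with h0 | h0
      · rw [← h0]; positivity
      · nlinarith
    calc ∑ i, ‖ContinuousLinearMap.adjoint (a i) ξ‖ ^ 2 = ‖w'‖ ^ 2 := hwnorm.symm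
      _ ≤ (‖T‖ * ‖ξ‖) ^ 2 := pow_le_pow_left₀ (norm_nonneg _) hwle 2
      _ = ‖T‖ ^ 2 * ‖ξ‖ ^ 2 := by ring
  have hrow : cR ≤ ‖T‖ := by
    rw [hcR]
    have h := CS_op (fun i => ContinuousLinearMap.adjoint (a i)) (‖T‖ ^ 2) (sq_nonneg (‖T‖)) hTlowR
    simp only [ContinuousLinearMap.adjoint_adjoint] at h
    calc Real.sqrt ‖∑ i, a i * ContinuousLinearMap.adjoint (a i)‖
        ≤ Real.sqrt (‖T‖ ^ 2) := Real.sqrt_le_sqrt h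
      _ = ‖T‖ := Real.sqrt_sq (norm_nonneg T)
  refine ⟨max_le hrow hcol, ?_⟩
  calc ‖T‖ ≤ cR + cA := hTub
    _ ≤ 2 * max cR cA := by
        have h1 : cR ≤ max cR cA := le_max_left _ _
        have h2 : cA ≤ max cR cA := le_max_right _ _
        linarith
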